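/- arXiv:1405.7126 — 2 statements merged into one kernel-verified Lean document; each statement's English description precedes it below -/
import Mathlib

section
/- Let E be an n-dimensional complex evolution algebra with natural basis {e_1,...,e_n}, structure matrix A = (a_{ij}) (so e_i·e_i = Σ_j a_{ij} e_j), with e_i² ≠ 0 for 1 ≤ i ≤ k and e_i² = 0 for i > k. If rank(A) < k, then E does not satisfy condition P: there exists a nonzero element x which is a linear combination of at most k of the e_i with x·x = 0, such that {x} cannot be extended to a natural basis of E. -/
open scoped BigOperators
open Matrix

/-- Evolution-algebra multiplication on `Fin n → ℂ` with structure matrix `A`. -/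
noncomputable def evMul {n : ℕ} (A : Matrix (Fin n) (Fin n) ℂ) (x y : Fin n → ℂ) : Fin n → ℂ :=
  fun j => ∑ i, x i * y i * A i j

theorem stmt13 (n k : ℕ) (hk : k ≤ n) (A : Matrix (Fin n) (Fin n) ℂ)
    -- e_i² ≠ 0 for i < k and e_i² = 0 for i ≥ k
    (h1 : ∀ i : Fin n, (i : ℕ) < k → (fun j => A i j) ≠ 0)
    (h2 : ∀ i : Fin n, k ≤ (i : ℕ) → ∀ j, A i j = 0)
    (hrank : A.rank < k) :
    ∃ x : Fin n → ℂ, x ≠ 0 ∧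
      -- x is a linear combination of the e_i with i < k
      (∀ i : Fin n, x i ≠ 0 → (i : ℕ) < k) ∧
      -- x spans a one-dimensional subalgebra: x·x = 0,
      evMul A x x = 0 ∧
      -- but {x} cannot be extended to a natural basis of E
      ¬ ∃ t : Set (Fin n → ℂ), x ∈ t ∧
          LinearIndependent ℂ ((↑) : t → (Fin n → ℂ)) ∧ Submodule.span ℂ t = ⊤ ∧
          (∀ u ∈ t, ∀ v ∈ t, u ≠ v → evMul A u v = 0) := by
  classical
  set B : Matrix (Fin k) (Fin n) ℂ := A.submatrix (Fin.castLE hk) id with hBdef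
  -- extension by zero of a vector on Fin k
  let ext : (Fin k → ℂ) → (Fin n → ℂ) :=
    fun c i => if h : (i : ℕ) < k then c ⟨i, h⟩ else 0
  have hext : ∀ (c : Fin k → ℂ) (j : Fin n),
      ∑ i : Fin n, ext c i * A i j = ∑ i : Fin k, c i * A (Fin.castLE hk i) j := by
    intro c j
    rw [← Finset.sum_subset (Finset.subset_univ
      (Finset.univ.map (Fin.castLEEmb hk)))]
    · rw [Finset.sum_map]
      refine Finset.sum_congr rfl fun i _ => ?_
      simp [ext, Fin.castLEEmb, i.isLt]
    · intro i _ hi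
      have : ¬ (i : ℕ) < k := by
        intro h
        exact hi (Finset.mem_map.mpr ⟨⟨i, h⟩, Finset.mem_univ _, rfl⟩)
      simp [ext, this]
  -- there is a nonzero c : Fin k → ℂ with ∑ c i • (row i of A) = 0
  have hker : ∃ c : Fin k → ℂ, c ≠ 0 ∧ Bᵀ.mulVec c = 0 := by
    by_contra h
    push_neg at h
    have hinj : Function.Injective Bᵀ.mulVecLin := by
      rw [← LinearMap.ker_eq_bot, LinearMap.ker_eq_bot']
      intro c hc
      by_contra hc0
      exact (h c hc0) hc
    have hle : LinearMap.range Bᵀ.mulVecLin ≤ LinearMap.range Aᵀ.mulVecLin := by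
      rintro _ ⟨c, rfl⟩
      refine ⟨ext c, ?_⟩
      funext j
      simp only [Matrix.mulVecLin_apply, Matrix.mulVec, dotProduct,
        Matrix.transpose_apply, hBdef, Matrix.submatrix_apply, id]
      calc ∑ x : Fin n, A x j * ext c x
          = ∑ x : Fin n, ext c x * A x j := Finset.sum_congr rfl fun i _ => mul_comm _ _
        _ = ∑ i : Fin k, c i * A (Fin.castLE hk i) j := hext c j
        _ = ∑ x : Fin k, A (Fin.castLE hk x) j * c x := Finset.sum_congr rfl fun i _ => mul_comm _ _
    have hB : Module.finrank ℂ (LinearMap.range Bᵀ.mulVecLin) = k := by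
      rw [LinearMap.finrank_range_of_inj hinj, Module.finrank_fin_fun]
    have : k ≤ A.rank := by
      rw [← Matrix.rank_transpose, Matrix.rank, ← hB]
      exact Submodule.finrank_mono hle
    omega
  obtain ⟨c, hc0, hcA⟩ := hker
  -- square roots
  choose s hs using fun i : Fin n => IsAlgClosed.exists_pow_nat_eq (ext c i) (n := 2) two_pos
  have hsq : ∀ i, s i * s i = ext c i := by
    intro i; rw [← hs i]; ring
  have hxx : evMul A s s = 0 := by
    funext j
    have := congrFun hcA j
    simp only [Matrix.mulVec, dotProduct, Matrix.transpose_apply, hBdef,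
      Matrix.submatrix_apply, id] at this
    show ∑ i, s i * s i * A i j = 0
    simp only [hsq]
    rw [hext c j]
    simp only [Pi.zero_apply] at this
    calc ∑ i : Fin k, c i * A (Fin.castLE hk i) j
        = ∑ i : Fin k, A (Fin.castLE hk i) j * c i := Finset.sum_congr rfl fun i _ => mul_comm _ _
      _ = 0 := this
  refine ⟨s, ?_, ?_, hxx, ?_⟩
  · obtain ⟨i, hi⟩ := Function.ne_iff.mp hc0
    intro hs0
    apply hi
    have : ext c (Fin.castLE hk i) = 0 := by
      rw [← hsq, hs0]; simp
    simpa [ext, i.isLt] using this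
  · intro i hi
    by_contra hik
    apply hi
    have : s i * s i = 0 := by rw [hsq]; simp [ext, hik]
    exact mul_self_eq_zero.mp this
  · rintro ⟨t, hxt, -, hspan, horth⟩
    -- pick i₀ with s i₀ ≠ 0
    obtain ⟨i, hi⟩ := Function.ne_iff.mp hc0
    have hsi : s (Fin.castLE hk i) ≠ 0 := by
      intro h0
      apply hi
      have : ext c (Fin.castLE hk i) = 0 := by rw [← hsq, h0]; simp
      simpa [ext, i.isLt] using this
    set i₀ : Fin n := Fin.castLE hk i
    have hrow : (fun j => A i₀ j) ≠ 0 := h1 i₀ i.isLt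
    obtain ⟨j₀, hj₀⟩ := Function.ne_iff.mp hrow
    -- the linear functional v ↦ (x·v) j₀
    let φ : (Fin n → ℂ) →ₗ[ℂ] ℂ :=
      { toFun := fun v => ∑ i, s i * v i * A i j₀
        map_add' := by
          intro u v
          simp only [Pi.add_apply, mul_add, add_mul]
          rw [Finset.sum_add_distrib]
        map_smul' := by
          intro a v
          simp only [Pi.smul_apply, smul_eq_mul, RingHom.id_apply, Finset.mul_sum]
          exact Finset.sum_congr rfl fun i _ => by ring }
    have hφt : ∀ u ∈ t, φ u = 0 := by
      intro u hu
      by_cases hus : u = s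
      · subst hus
        exact congrFun hxx j₀
      · exact congrFun (horth s hxt u hu (fun h => hus h.symm)) j₀
    have hker : Submodule.span ℂ t ≤ LinearMap.ker φ := by
      rw [Submodule.span_le]
      intro u hu
      exact hφt u hu
    rw [hspan] at hker
    have := hker (Submodule.mem_top (x := Pi.single i₀ (1:ℂ)))
    simp only [LinearMap.mem_ker, φ, LinearMap.coe_mk, AddHom.coe_mk] at this
    rw [Finset.sum_eq_single i₀] at this
    · simp at this
      tauto
    · intro b _ hb
      simp [Pi.single_apply, hb]
    · intro h; exact absurd (Finset.mem_univ _) h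
end

section
/- An n-dimensional complex evolution algebra E is nilpotent if and only if, after a permutation of its natural basis, the matrix of structure constants A is strictly upper triangular (a_{ij} = 0 for j ≤ i). -/
open scoped BigOperators

/-- Product of two subspaces: the span of all products. -/
noncomputable def mulSub {n : ℕ} (A : Matrix (Fin n) (Fin n) ℂ)
    (S T : Submodule ℂ (Fin n → ℂ)) : Submodule ℂ (Fin n → ℂ) :=
  Submodule.span ℂ {z | ∃ x ∈ S, ∃ y ∈ T, z = evMul A x y}

/-- `evPow A m` is `E^{m+1}`, where `E¹ = E` and `E^k = ∑_{i=1}^{k-1} E^i · E^{k-i}`. -/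
noncomputable def evPow {n : ℕ} (A : Matrix (Fin n) (Fin n) ℂ) : ℕ → Submodule ℂ (Fin n → ℂ)
  | 0 => ⊤
  | (m + 1) => ⨆ i : Fin (m + 1), mulSub A (evPow A i) (evPow A (m - (i : ℕ)))
  decreasing_by
  · exact i.isLt
  · omega

lemma evMul_comm {n : ℕ} (A : Matrix (Fin n) (Fin n) ℂ) (x y : Fin n → ℂ) :
    evMul A x y = evMul A y x := by
  funext j
  unfold evMul
  exact Finset.sum_congr rfl fun i _ => by ring

/-- The subspace spanned by `e_{σ l}` for `l ≥ k`. -/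
noncomputable def Wk {n : ℕ} (σ : Equiv.Perm (Fin n)) (k : ℕ) : Submodule ℂ (Fin n → ℂ) where
  carrier := {x | ∀ l : Fin n, (l : ℕ) < k → x (σ l) = 0}
  add_mem' := by
    intro a b ha hb l hl
    simp [ha l hl, hb l hl]
  zero_mem' := by intro l hl; rfl
  smul_mem' := by
    intro c a ha l hl
    simp [ha l hl]

lemma Wk_top {n : ℕ} (σ : Equiv.Perm (Fin n)) : Wk σ 0 = ⊤ := by
  ext x
  simp only [Submodule.mem_top, iff_true]
  intro l hl
  omega

lemma Wk_bot {n : ℕ} (σ : Equiv.Perm (Fin n)) : Wk σ n = ⊥ := by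
  ext x
  constructor
  · intro hx
    simp only [Submodule.mem_bot]
    funext j
    have := hx (σ.symm j) (σ.symm j).isLt
    simpa using this
  · rintro hx
    simp only [Submodule.mem_bot] at hx
    subst hx
    intro l hl; rfl

lemma evMul_mem_Wk {n : ℕ} {A : Matrix (Fin n) (Fin n) ℂ} {σ : Equiv.Perm (Fin n)}
    (hA : ∀ i j : Fin n, j ≤ i → A (σ i) (σ j) = 0) {k : ℕ} {x : Fin n → ℂ}
    (hx : x ∈ Wk σ k) (y : Fin n → ℂ) : evMul A x y ∈ Wk σ (k + 1) := by
  intro l hl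
  unfold evMul
  apply Finset.sum_eq_zero
  intro i _
  rcases lt_or_ge ((σ.symm i : Fin n) : ℕ) k with h | h
  · have : x (σ (σ.symm i)) = 0 := hx (σ.symm i) h
    simp only [Equiv.apply_symm_apply] at this
    simp [this]
  · have hle : l ≤ σ.symm i := by
      rw [Fin.le_def]; omega
    have : A (σ (σ.symm i)) (σ l) = 0 := hA (σ.symm i) l hle
    simp only [Equiv.apply_symm_apply] at this
    simp [this]

lemma mulSub_le_Wk_left {n : ℕ} {A : Matrix (Fin n) (Fin n) ℂ} {σ : Equiv.Perm (Fin n)}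
    (hA : ∀ i j : Fin n, j ≤ i → A (σ i) (σ j) = 0) {k : ℕ} {S T : Submodule ℂ (Fin n → ℂ)}
    (hS : S ≤ Wk σ k) : mulSub A S T ≤ Wk σ (k + 1) := by
  apply Submodule.span_le.2
  rintro z ⟨x, hx, y, hy, rfl⟩
  exact evMul_mem_Wk hA (hS hx) y

lemma mulSub_le_Wk_right {n : ℕ} {A : Matrix (Fin n) (Fin n) ℂ} {σ : Equiv.Perm (Fin n)}
    (hA : ∀ i j : Fin n, j ≤ i → A (σ i) (σ j) = 0) {k : ℕ} {S T : Submodule ℂ (Fin n → ℂ)}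
    (hT : T ≤ Wk σ k) : mulSub A S T ≤ Wk σ (k + 1) := by
  apply Submodule.span_le.2
  rintro z ⟨x, hx, y, hy, rfl⟩
  rw [evMul_comm]
  exact evMul_mem_Wk hA (hT hy) x

lemma evPow_le_Wk {n : ℕ} {A : Matrix (Fin n) (Fin n) ℂ} {σ : Equiv.Perm (Fin n)}
    (hA : ∀ i j : Fin n, j ≤ i → A (σ i) (σ j) = 0) :
    ∀ m k : ℕ, 2 ^ k ≤ m + 1 → evPow A m ≤ Wk σ k := by
  intro m
  induction m using Nat.strong_induction_on with
  | _ m IH =>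
    intro k hk
    cases k with
    | zero => rw [Wk_top]; exact le_top
    | succ k =>
      have h1 : 1 ≤ 2 ^ k := Nat.one_le_two_pow
      have hm : 2 * 2 ^ k ≤ m + 1 := by rw [pow_succ, mul_comm] at hk; exact hk
      obtain ⟨m', rfl⟩ : ∃ m', m = m' + 1 := ⟨m - 1, by omega⟩
      rw [evPow]
      apply iSup_le
      intro i
      rcases le_or_gt (2 ^ k) ((i : ℕ) + 1) with h | h
      · exact mulSub_le_Wk_left hA (IH i (by omega) k h)
      · have hi : (i : ℕ) ≤ m' := by omega
        have : 2 ^ k ≤ (m' - (i : ℕ)) + 1 := by omega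
        exact mulSub_le_Wk_right hA (IH (m' - (i : ℕ)) (by omega) k this)

lemma evMul_single_mem_evPow {n : ℕ} (A : Matrix (Fin n) (Fin n) ℂ) {m : ℕ}
    {u : Fin n → ℂ} (hu : u ∈ evPow A m) (y : Fin n → ℂ) :
    evMul A u y ∈ evPow A (m + 1) := by
  rw [evPow]
  refine le_iSup (fun i : Fin (m + 1) => mulSub A (evPow A i) (evPow A (m - (i : ℕ))))
    (Fin.last m) ?_
  simp only [Fin.val_last, Nat.sub_self]
  exact Submodule.subset_span ⟨u, hu, y, by rw [evPow]; trivial, rfl⟩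

theorem stmt14 (n : ℕ) (A : Matrix (Fin n) (Fin n) ℂ) :
    -- E is nilpotent (some power E^m vanishes) iff after a permutation of the
    -- natural basis the structure matrix is strictly upper triangular.
    (∃ m : ℕ, evPow A m = ⊥) ↔
      ∃ σ : Equiv.Perm (Fin n), ∀ i j : Fin n, j ≤ i → A (σ i) (σ j) = 0 := by
  constructor
  · rintro ⟨m, hm⟩
    -- The relation `r a b : a is hit by b`, i.e. `A b a ≠ 0`, is well-founded.
    set r : Fin n → Fin n → Prop := fun a b => A b a ≠ 0 with hr
    have hwf : WellFounded r := by
      by_contra hnwf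
      have hex : ∃ x, ¬ Acc r x := by
        by_contra h
        push_neg at h
        exact hnwf ⟨h⟩
      obtain ⟨x, hx⟩ := hex
      have hch : ∀ p : {a : Fin n // ¬ Acc r a}, ∃ q : {a : Fin n // ¬ Acc r a}, r q.1 p.1 := by
        rintro ⟨a, ha⟩
        obtain ⟨b, hb1, hb2⟩ := exists_not_acc_lt_of_not_acc ha
        exact ⟨⟨b, hb1⟩, hb2⟩
      choose F hF using hch
      set f : ℕ → Fin n := fun t => (F^[t] ⟨x, hx⟩).1 with hf
      have hstep : ∀ t : ℕ, A (f t) (f (t + 1)) ≠ 0 := by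
        intro t
        have : r (f (t + 1)) (f t) := by
          simp only [hf, Function.iterate_succ', Function.comp_apply]
          exact hF _
        exact this
      have key : ∀ t : ℕ, ∃ u ∈ evPow A t, u (f t) ≠ 0 := by
        intro t
        induction t with
        | zero =>
          refine ⟨Pi.single (f 0) 1, by rw [evPow]; trivial, ?_⟩
          simp
        | succ t ih =>
          obtain ⟨u, hu, hune⟩ := ih
          refine ⟨evMul A u (Pi.single (f t) 1), evMul_single_mem_evPow A hu _, ?_⟩
          unfold evMul
          rw [Finset.sum_eq_single (f t)]
          · simp only [Pi.single_eq_same, mul_one]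
            exact mul_ne_zero hune (hstep t)
          · intro b _ hb
            simp [Pi.single_eq_of_ne hb]
          · simp
      obtain ⟨u, hu, hune⟩ := key m
      rw [hm] at hu
      simp only [Submodule.mem_bot] at hu
      exact hune (by rw [hu]; rfl)
    haveI : IsWellFounded (Fin n) r := ⟨hwf⟩
    -- sort basis by decreasing rank
    set g : Fin n → Ordinalᵒᵈ := fun i => OrderDual.toDual (IsWellFounded.rank r i) with hg
    refine ⟨Tuple.sort g, ?_⟩
    intro i j hij
    by_contra hne
    have hrel : r (Tuple.sort g j) (Tuple.sort g i) := hne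
    have hlt : IsWellFounded.rank r (Tuple.sort g j) < IsWellFounded.rank r (Tuple.sort g i) :=
      IsWellFounded.rank_lt_of_rel hrel
    have hmono := Tuple.monotone_sort g hij
    simp only [Function.comp_apply, hg, OrderDual.toDual_le_toDual] at hmono
    exact absurd hmono (not_le.2 hlt)
  · rintro ⟨σ, hA⟩
    refine ⟨2 ^ n - 1, le_bot_iff.1 ?_⟩
    rw [← Wk_bot σ]
    exact evPow_le_Wk hA _ n (by have : 1 ≤ 2 ^ n := Nat.one_le_two_pow; omega)
end
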